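/- Covering bound for a boundary curve by grid squares: let γ be a closed lattice path in the plane of length p, and partition an axis-aligned bounding square of side n (with n a power of 2, n ≥ p) into 4^i congruent subsquares of side n/2^i. Then the number of subsquares whose interior or boundary is intersected by γ is less than 9·2^{i−1}, provided p ≤ n. -/

import Mathlib

lemma my_ediv_add_ediv_le (s a b : ℤ) (hs : 0 < s) : a / s + b / s ≤ (a + b) / s := by
  rw [Int.le_ediv_iff_mul_le hs, add_mul]
  have ha := Int.mul_ediv_add_emod a s
  have hb := Int.mul_ediv_add_emod b s
  have ha' := Int.emod_nonneg a hs.ne'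
  have hb' := Int.emod_nonneg b hs.ne'
  nlinarith

lemma my_abs_telescope (f : ℕ → ℤ) (m : ℕ) : ∀ n, m ≤ n →
    |f n - f m| ≤ ∑ k ∈ Finset.Ico m n, |f (k + 1) - f k| := by
  intro n hn
  induction n, hn using Nat.le_induction with
  | base => simp
  | succ n hmn ih =>
    rw [Finset.sum_Ico_succ_top hmn]
    calc |f (n + 1) - f m| ≤ |f (n + 1) - f n| + |f n - f m| := abs_sub_le _ _ _
      _ ≤ _ := by linarith

lemma my_box_count (s mx Mx my My : ℤ) (hs : 0 < s) (hx : mx ≤ Mx) (hy : my ≤ My)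
    (S : Set (ℤ × ℤ))
    (hS : ∀ c ∈ S, ∃ x y : ℤ, mx ≤ x ∧ x ≤ Mx ∧ my ≤ y ∧ y ≤ My ∧
      c.1 * s ≤ x ∧ x ≤ (c.1 + 1) * s ∧ c.2 * s ≤ y ∧ y ≤ (c.2 + 1) * s) :
    S.Finite ∧
    S.ncard ≤ (((Mx - mx) / s).toNat + 2) * (((My - my) / s).toNat + 2) := by
  have hsub : S ⊆ ↑((Finset.Icc (-((-mx) / s) - 1) (Mx / s)) ×ˢ
      (Finset.Icc (-((-my) / s) - 1) (My / s))) := by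
    rintro ⟨c1, c2⟩ hc
    obtain ⟨x, y, h1, h2, h3, h4, h5, h6, h7, h8⟩ := hS _ hc
    simp only [Finset.coe_product, Set.mem_prod, Finset.mem_coe, Finset.mem_Icc]
    refine ⟨⟨?_, ?_⟩, ?_, ?_⟩
    · have hx1 : -(c1 + 1) ≤ (-x) / s := by
        rw [Int.le_ediv_iff_mul_le hs]; nlinarith
      have hx2 : (-x) / s ≤ (-mx) / s := Int.ediv_le_ediv hs (by linarith)
      linarith
    · have h : c1 ≤ x / s := by rw [Int.le_ediv_iff_mul_le hs]; linarith
      exact h.trans (Int.ediv_le_ediv hs h2)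
    · have hx1 : -(c2 + 1) ≤ (-y) / s := by
        rw [Int.le_ediv_iff_mul_le hs]; nlinarith
      have hx2 : (-y) / s ≤ (-my) / s := Int.ediv_le_ediv hs (by linarith)
      linarith
    · have h : c2 ≤ y / s := by rw [Int.le_ediv_iff_mul_le hs]; linarith
      exact h.trans (Int.ediv_le_ediv hs h4)
  have hfin : S.Finite := Set.Finite.subset (Finset.finite_toSet _) hsub
  refine ⟨hfin, ?_⟩
  have h1 : S.ncard ≤ _ := Set.ncard_le_ncard hsub (Finset.finite_toSet _)
  rw [Set.ncard_coe_finset, Finset.card_product, Int.card_Icc, Int.card_Icc] at h1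
  refine h1.trans (Nat.mul_le_mul ?_ ?_)
  · have e1 : Mx / s + (-mx) / s ≤ (Mx - mx) / s := by
      have := my_ediv_add_ediv_le s Mx (-mx) hs
      rwa [← sub_eq_add_neg] at this
    have e2 : 0 ≤ (Mx - mx) / s := Int.ediv_nonneg (by linarith) hs.le
    omega
  · have e1 : My / s + (-my) / s ≤ (My - my) / s := by
      have := my_ediv_add_ediv_le s My (-my) hs
      rwa [← sub_eq_add_neg] at this
    have e2 : 0 ≤ (My - my) / s := Int.ediv_nonneg (by linarith) hs.le
    omega

lemma my_closed_var (f : ℕ → ℤ) (p : ℕ) (hf : f p = f 0) (m n : ℕ) (hmn : m ≤ n) (hnp : n ≤ p) :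
    2 * |f n - f m| ≤ ∑ k ∈ Finset.Ico 0 p, |f (k + 1) - f k| := by
  have h1 := Finset.sum_Ico_consecutive (fun k => |f (k + 1) - f k|) (Nat.zero_le m) hmn
  have h2 := Finset.sum_Ico_consecutive (fun k => |f (k + 1) - f k|) (Nat.zero_le n) hnp
  have ha := my_abs_telescope f m n hmn
  have hb := my_abs_telescope f 0 m (Nat.zero_le m)
  have hc := my_abs_telescope f n p hnp
  have key : |f n - f m| ≤ |f m - f 0| + |f p - f n| := by
    have e : |f n - f m| = |(f m - f 0) + (f p - f n)| := by
      rw [abs_sub_comm]; congr 1; rw [hf]; ring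
    rw [e]; exact abs_add_le _ _
  linarith

/-- Covering bound for a boundary curve by grid squares: a closed lattice path of
length `p ≤ n = 2^t`, contained in the square `[0,n]²`, meets fewer than `9·2^(i-1)`
of the `4^i` grid cells of side `n/2^i` (a cell, recorded by its index `c`, is the
square `[c.1·n/2^i, (c.1+1)·n/2^i] × [c.2·n/2^i, (c.2+1)·n/2^i]`). -/
theorem boundary_cell_cover (t i p : ℕ) (hi : 1 ≤ i) (hit : i ≤ t)
    (γ : ℕ → ℤ × ℤ) (hp : 0 < p) (hpn : (p : ℤ) ≤ 2 ^ t)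
    (hclosed : γ p = γ 0)
    (hstep : ∀ k < p, |(γ (k + 1)).1 - (γ k).1| + |(γ (k + 1)).2 - (γ k).2| = 1)
    (hbound : ∀ k ≤ p, 0 ≤ (γ k).1 ∧ (γ k).1 ≤ 2 ^ t ∧ 0 ≤ (γ k).2 ∧ (γ k).2 ≤ 2 ^ t) :
    {c : ℤ × ℤ | ∃ k < p,
        c.1 * 2 ^ (t - i) ≤ (γ k).1 ∧ (γ k).1 ≤ (c.1 + 1) * 2 ^ (t - i) ∧
        c.2 * 2 ^ (t - i) ≤ (γ k).2 ∧ (γ k).2 ≤ (c.2 + 1) * 2 ^ (t - i)}.Finite ∧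
    {c : ℤ × ℤ | ∃ k < p,
        c.1 * 2 ^ (t - i) ≤ (γ k).1 ∧ (γ k).1 ≤ (c.1 + 1) * 2 ^ (t - i) ∧
        c.2 * 2 ^ (t - i) ≤ (γ k).2 ∧ (γ k).2 ≤ (c.2 + 1) * 2 ^ (t - i)}.ncard
      < 9 * 2 ^ (i - 1) := by
  set s : ℤ := 2 ^ (t - i) with hsdef
  have hs : 0 < s := by positivity
  set cond : ℕ → ℤ × ℤ → Prop := fun k c =>
    c.1 * s ≤ (γ k).1 ∧ (γ k).1 ≤ (c.1 + 1) * s ∧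
    c.2 * s ≤ (γ k).2 ∧ (γ k).2 ≤ (c.2 + 1) * s with hcond
  set Target : Set (ℤ × ℤ) := {c | ∃ k < p, cond k c} with hTarget
  -- variation sums
  set Vx : ℕ → ℕ → ℤ := fun a b => ∑ k ∈ Finset.Ico a b, |(γ (k + 1)).1 - (γ k).1| with hVx
  set Vy : ℕ → ℕ → ℤ := fun a b => ∑ k ∈ Finset.Ico a b, |(γ (k + 1)).2 - (γ k).2| with hVy
  have habsx : ∀ m n, m ≤ n → |(γ n).1 - (γ m).1| ≤ Vx m n :=
    fun m n h => my_abs_telescope (fun k => (γ k).1) m n h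
  have habsy : ∀ m n, m ≤ n → |(γ n).2 - (γ m).2| ≤ Vy m n :=
    fun m n h => my_abs_telescope (fun k => (γ k).2) m n h
  have hmonox : ∀ a m n b : ℕ, a ≤ m → n ≤ b → Vx m n ≤ Vx a b := by
    intro a m n b h1 h2
    exact Finset.sum_le_sum_of_subset_of_nonneg (Finset.Ico_subset_Ico h1 h2)
      (fun k _ _ => abs_nonneg _)
  have hmonoy : ∀ a m n b : ℕ, a ≤ m → n ≤ b → Vy m n ≤ Vy a b := by
    intro a m n b h1 h2
    exact Finset.sum_le_sum_of_subset_of_nonneg (Finset.Ico_subset_Ico h1 h2)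
      (fun k _ _ => abs_nonneg _)
  have hsum : ∀ a b : ℕ, a ≤ b → b ≤ p → Vx a b + Vy a b = (b : ℤ) - (a : ℤ) := by
    intro a b hab hbp
    rw [hVx, hVy]
    simp only
    rw [← Finset.sum_add_distrib]
    rw [Finset.sum_congr rfl (fun k hk => hstep k (lt_of_lt_of_le (Finset.mem_Ico.1 hk).2 hbp))]
    rw [Finset.sum_const, Nat.card_Ico, nsmul_eq_mul, mul_one]
    omega
  -- generic counting given extent bounds
  have count_of_extent : ∀ (S : Set (ℤ × ℤ)) (Mx mx My my : ℤ) (n : ℕ),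
      mx ≤ Mx → my ≤ My → (Mx - mx) + (My - my) ≤ (n : ℤ) * s →
      (∀ c ∈ S, ∃ k, mx ≤ (γ k).1 ∧ (γ k).1 ≤ Mx ∧ my ≤ (γ k).2 ∧ (γ k).2 ≤ My ∧ cond k c) →
      S.Finite ∧ ∃ U V : ℕ, U + V ≤ n ∧ S.ncard ≤ (U + 2) * (V + 2) := by
    intro S Mx mx My my n hx hy hext hS
    obtain ⟨hfin, hcard⟩ := my_box_count s mx Mx my My hs hx hy S (by
      intro c hc
      obtain ⟨k, h1, h2, h3, h4, h5⟩ := hS c hc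
      exact ⟨(γ k).1, (γ k).2, h1, h2, h3, h4, h5.1, h5.2.1, h5.2.2.1, h5.2.2.2⟩)
    refine ⟨hfin, ((Mx - mx) / s).toNat, ((My - my) / s).toNat, ?_, hcard⟩
    have h1 : (Mx - mx) / s + (My - my) / s ≤ (Mx - mx + (My - my)) / s :=
      my_ediv_add_ediv_le s _ _ hs
    have h2 : (Mx - mx + (My - my)) / s ≤ ((n : ℤ) * s) / s := Int.ediv_le_ediv hs hext
    have h3 : ((n : ℤ) * s) / s = (n : ℤ) := Int.mul_ediv_cancel _ hs.ne'
    have hu : 0 ≤ (Mx - mx) / s := Int.ediv_nonneg (by linarith) hs.le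
    have hv : 0 ≤ (My - my) / s := Int.ediv_nonneg (by linarith) hs.le
    omega
  -- window bound
  have window9 : ∀ a b : ℕ, a ≤ b → b < p → (b : ℤ) - (a : ℤ) ≤ 2 * s →
      ({c : ℤ × ℤ | ∃ k, a ≤ k ∧ k ≤ b ∧ cond k c}).Finite ∧
      ({c : ℤ × ℤ | ∃ k, a ≤ k ∧ k ≤ b ∧ cond k c}).ncard ≤ 9 := by
    intro a b hab hbp hlen
    have haK : a ∈ Finset.Icc a b := Finset.mem_Icc.2 ⟨le_rfl, hab⟩
    obtain ⟨k1, hk1K, hk1⟩ := Finset.exists_max_image (Finset.Icc a b) (fun k => (γ k).1) ⟨a, haK⟩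
    obtain ⟨k2, hk2K, hk2⟩ := Finset.exists_min_image (Finset.Icc a b) (fun k => (γ k).1) ⟨a, haK⟩
    obtain ⟨k3, hk3K, hk3⟩ := Finset.exists_max_image (Finset.Icc a b) (fun k => (γ k).2) ⟨a, haK⟩
    obtain ⟨k4, hk4K, hk4⟩ := Finset.exists_min_image (Finset.Icc a b) (fun k => (γ k).2) ⟨a, haK⟩
    have hvarx : ∀ m n : ℕ, m ∈ Finset.Icc a b → n ∈ Finset.Icc a b →
        (γ n).1 - (γ m).1 ≤ Vx a b := by
      intro m n hm hn
      rw [Finset.mem_Icc] at hm hn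
      rcases le_total m n with h | h
      · exact le_trans (le_abs_self _) ((habsx m n h).trans (hmonox a m n b hm.1 hn.2))
      · have h2 : (γ n).1 - (γ m).1 ≤ |(γ m).1 - (γ n).1| := by
          rw [abs_sub_comm]; exact le_abs_self _
        exact h2.trans ((habsx n m h).trans (hmonox a n m b hn.1 hm.2))
    have hvary : ∀ m n : ℕ, m ∈ Finset.Icc a b → n ∈ Finset.Icc a b →
        (γ n).2 - (γ m).2 ≤ Vy a b := by
      intro m n hm hn
      rw [Finset.mem_Icc] at hm hn
      rcases le_total m n with h | h
      · exact le_trans (le_abs_self _) ((habsy m n h).trans (hmonoy a m n b hm.1 hn.2))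
      · have h2 : (γ n).2 - (γ m).2 ≤ |(γ m).2 - (γ n).2| := by
          rw [abs_sub_comm]; exact le_abs_self _
        exact h2.trans ((habsy n m h).trans (hmonoy a n m b hn.1 hm.2))
    have hext : ((γ k1).1 - (γ k2).1) + ((γ k3).2 - (γ k4).2) ≤ (2 : ℤ) * s := by
      have h1 := hvarx k2 k1 hk2K hk1K
      have h2 := hvary k4 k3 hk4K hk3K
      have h3 := hsum a b hab hbp.le
      linarith
    obtain ⟨hfin, U, V, hUV, hcard⟩ := count_of_extent
      {c : ℤ × ℤ | ∃ k, a ≤ k ∧ k ≤ b ∧ cond k c} ((γ k1).1) ((γ k2).1)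
      ((γ k3).2) ((γ k4).2) 2 (hk2 k1 hk1K) (hk4 k3 hk3K) (by push_cast; linarith) (by
        rintro c ⟨k, hak, hkb, hc⟩
        have hkK : k ∈ Finset.Icc a b := Finset.mem_Icc.2 ⟨hak, hkb⟩
        exact ⟨k, hk2 k hkK, hk1 k hkK, hk4 k hkK, hk3 k hkK, hc⟩)
    refine ⟨hfin, hcard.trans ?_⟩
    have hU2 : U ≤ 2 := by omega
    interval_cases U <;> omega
  -- finiteness of the target
  have hTfin : Target.Finite := by
    apply Set.Finite.subset ((Set.finite_Icc (-1 : ℤ) (2 ^ i)).prod (Set.finite_Icc (-1 : ℤ) (2 ^ i)))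
    rintro ⟨c1, c2⟩ ⟨k, hkp, h1, h2, h3, h4⟩
    obtain ⟨hb1, hb2, hb3, hb4⟩ := hbound k hkp.le
    have hts : (2 : ℤ) ^ i * s = 2 ^ t := by rw [hsdef, ← pow_add]; congr 1; omega
    simp only [Set.mem_prod, Set.mem_Icc]
    refine ⟨⟨?_, ?_⟩, ?_, ?_⟩
    · by_contra hcon
      push_neg at hcon
      have h5 : c1 + 1 ≤ -1 := by omega
      have h6 := mul_le_mul_of_nonneg_right h5 hs.le
      simp only at h1 h2 h3 h4
      nlinarith
    · simp only at h1 h2 h3 h4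
      exact le_of_mul_le_mul_right (by nlinarith) hs
    · by_contra hcon
      push_neg at hcon
      have h5 : c2 + 1 ≤ -1 := by omega
      have h6 := mul_le_mul_of_nonneg_right h5 hs.le
      simp only at h1 h2 h3 h4
      nlinarith
    · simp only at h1 h2 h3 h4
      exact le_of_mul_le_mul_right (by nlinarith) hs
  refine ⟨hTfin, ?_⟩
  by_cases hi2 : 2 ≤ i
  · -- chaining over windows
    set s' : ℕ := 2 ^ (t - i) with hs'def
    have hscast : ((s' : ℕ) : ℤ) = s := by rw [hsdef, hs'def]; push_cast; ring
    set W : ℕ := 2 ^ (i - 1) with hWdef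
    have hW2 : 2 ≤ W := by
      rw [hWdef]
      calc 2 = 2 ^ 1 := rfl
        _ ≤ 2 ^ (i - 1) := Nat.pow_le_pow_right (by norm_num) (by omega)
    have hpt : p ≤ 2 ^ t := by exact_mod_cast hpn
    have hpW : p ≤ 2 * s' * W := by
      have h1 : 2 * s' * W = 2 ^ t := by
        rw [hs'def, hWdef,
          show (2 : ℕ) * 2 ^ (t - i) * 2 ^ (i - 1) = 2 ^ (1 + (t - i) + (i - 1)) by
            rw [pow_add, pow_add, pow_one]]
        congr 1; omega
      omega
    set F : ℕ → Set (ℤ × ℤ) := fun m => {c | ∃ k, k ≤ m ∧ k < p ∧ cond k c} with hF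
    have hFsub : ∀ m, F m ⊆ Target := by
      rintro m c ⟨k, _, hkp, hc⟩; exact ⟨k, hkp, hc⟩
    have hFfin : ∀ m, (F m).Finite := fun m => hTfin.subset (hFsub m)
    have floorcell : ∀ k : ℕ, cond k ((γ k).1 / s, (γ k).2 / s) := by
      intro k
      exact ⟨Int.ediv_mul_le _ hs.ne', (Int.lt_ediv_add_one_mul_self _ hs).le,
        Int.ediv_mul_le _ hs.ne', (Int.lt_ediv_add_one_mul_self _ hs).le⟩
    have chain : ∀ j : ℕ, (F (2 * s' * (j + 1))).ncard ≤ 9 + 8 * j := by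
      intro j
      induction j with
      | zero =>
        have hb : min (2 * s') (p - 1) < p := by omega
        obtain ⟨wfin, wcard⟩ := window9 0 (min (2 * s') (p - 1)) (Nat.zero_le _) hb (by
          have h1 : ((min (2 * s') (p - 1) : ℕ) : ℤ) ≤ ((2 * s' : ℕ) : ℤ) := by
            exact_mod_cast min_le_left _ _
          have h2 : ((2 * s' : ℕ) : ℤ) = 2 * s := by push_cast [hscast]; ring
          linarith)
        refine le_trans (Set.ncard_le_ncard ?_ wfin) wcard
        rintro c ⟨k, hk1, hk2, hc⟩
        exact ⟨k, Nat.zero_le _, by omega, hc⟩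
      | succ j ih =>
        have hidx : 2 * s' * (j + 1 + 1) = 2 * s' * (j + 1) + 2 * s' := by ring
        by_cases hap : p ≤ 2 * s' * (j + 1)
        · have heq : F (2 * s' * (j + 1 + 1)) ⊆ F (2 * s' * (j + 1)) := by
            rintro c ⟨k, hk1, hk2, hc⟩
            exact ⟨k, by omega, hk2, hc⟩
          have := Set.ncard_le_ncard heq (hFfin _)
          omega
        · push_neg at hap
          set a := 2 * s' * (j + 1) with ha
          set b := min (2 * s' * (j + 1 + 1)) (p - 1) with hbdef
          have hab : a ≤ b := by
            have h1 : a ≤ 2 * s' * (j + 1 + 1) := Nat.mul_le_mul le_rfl (by omega)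
            have h2 : a ≤ p - 1 := by omega
            omega
          have hbp : b < p := by omega
          have hlen : (b : ℤ) - (a : ℤ) ≤ 2 * s := by
            have h1 : b ≤ a + 2 * s' := by omega
            have h2 : ((b : ℕ) : ℤ) ≤ ((a + 2 * s' : ℕ) : ℤ) := by exact_mod_cast h1
            push_cast [hscast] at h2
            linarith
          obtain ⟨wfin, wcard⟩ := window9 a b hab hbp hlen
          have hcsF : ((γ a).1 / s, (γ a).2 / s) ∈ F a := ⟨a, le_rfl, hap, floorcell a⟩
          have hcsC : ((γ a).1 / s, (γ a).2 / s) ∈ {c : ℤ × ℤ | ∃ k, a ≤ k ∧ k ≤ b ∧ cond k c} :=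
            ⟨a, le_rfl, hab, floorcell a⟩
          have hsub2 : F (2 * s' * (j + 1 + 1)) ⊆
              F a ∪ ({c : ℤ × ℤ | ∃ k, a ≤ k ∧ k ≤ b ∧ cond k c} \ {((γ a).1 / s, (γ a).2 / s)}) := by
            rintro c ⟨k, hk1, hk2, hc⟩
            by_cases hka : k ≤ a
            · exact Or.inl ⟨k, hka, hk2, hc⟩
            · by_cases hcc : c = ((γ a).1 / s, (γ a).2 / s)
              · exact Or.inl (hcc ▸ hcsF)
              · exact Or.inr ⟨⟨k, by omega, by omega, hc⟩, hcc⟩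
          have hd := Set.ncard_diff_singleton_of_mem hcsC
          have hu1 := Set.ncard_le_ncard hsub2 ((hFfin a).union wfin.diff)
          have hu2 := Set.ncard_union_le (F a)
            ({c : ℤ × ℤ | ∃ k, a ≤ k ∧ k ≤ b ∧ cond k c} \ {((γ a).1 / s, (γ a).2 / s)})
          omega
    have hTF : Target ⊆ F (2 * s' * (W - 1 + 1)) := by
      rintro c ⟨k, hkp, hc⟩
      refine ⟨k, ?_, hkp, hc⟩
      have : W - 1 + 1 = W := by omega
      rw [this]
      omega
    have hch := chain (W - 1)
    have hle := Set.ncard_le_ncard hTF (hFfin _)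
    have hgoal : 9 * 2 ^ (i - 1) = 9 * W := by rw [hWdef]
    omega
  · -- i = 1 : use closedness
    have hi1 : i = 1 := by omega
    have hp2s : (p : ℤ) ≤ 2 * s := by
      have h1 : (2 : ℤ) ^ t = 2 ^ (t - 1) * 2 := by rw [← pow_succ]; congr 1; omega
      have h2 : s = 2 ^ (t - 1) := by rw [hsdef, hi1]
      linarith [hpn, h1]
    have h0K : (0 : ℕ) ∈ Finset.Icc 0 p := Finset.mem_Icc.2 ⟨le_rfl, Nat.zero_le p⟩
    obtain ⟨k1, hk1K, hk1⟩ := Finset.exists_max_image (Finset.Icc 0 p) (fun k => (γ k).1) ⟨0, h0K⟩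
    obtain ⟨k2, hk2K, hk2⟩ := Finset.exists_min_image (Finset.Icc 0 p) (fun k => (γ k).1) ⟨0, h0K⟩
    obtain ⟨k3, hk3K, hk3⟩ := Finset.exists_max_image (Finset.Icc 0 p) (fun k => (γ k).2) ⟨0, h0K⟩
    obtain ⟨k4, hk4K, hk4⟩ := Finset.exists_min_image (Finset.Icc 0 p) (fun k => (γ k).2) ⟨0, h0K⟩
    have hvx : 2 * ((γ k1).1 - (γ k2).1) ≤ Vx 0 p := by
      have habs : 2 * |(γ k1).1 - (γ k2).1| ≤ Vx 0 p := by
        rcases le_total k1 k2 with h | h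
        · rw [abs_sub_comm]
          exact my_closed_var (fun k => (γ k).1) p (congrArg Prod.fst hclosed) k1 k2 h
            (Finset.mem_Icc.1 hk2K).2
        · exact my_closed_var (fun k => (γ k).1) p (congrArg Prod.fst hclosed) k2 k1 h
            (Finset.mem_Icc.1 hk1K).2
      calc 2 * ((γ k1).1 - (γ k2).1) ≤ 2 * |(γ k1).1 - (γ k2).1| := by
            have := le_abs_self ((γ k1).1 - (γ k2).1); linarith
        _ ≤ Vx 0 p := habs
    have hvy : 2 * ((γ k3).2 - (γ k4).2) ≤ Vy 0 p := by
      have habs : 2 * |(γ k3).2 - (γ k4).2| ≤ Vy 0 p := by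
        rcases le_total k3 k4 with h | h
        · rw [abs_sub_comm]
          exact my_closed_var (fun k => (γ k).2) p (congrArg Prod.snd hclosed) k3 k4 h
            (Finset.mem_Icc.1 hk4K).2
        · exact my_closed_var (fun k => (γ k).2) p (congrArg Prod.snd hclosed) k4 k3 h
            (Finset.mem_Icc.1 hk3K).2
      calc 2 * ((γ k3).2 - (γ k4).2) ≤ 2 * |(γ k3).2 - (γ k4).2| := by
            have := le_abs_self ((γ k3).2 - (γ k4).2); linarith
        _ ≤ Vy 0 p := habs
    have hVsum : Vx 0 p + Vy 0 p = (p : ℤ) := by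
      have := hsum 0 p (Nat.zero_le p) le_rfl
      simpa using this
    have hext : ((γ k1).1 - (γ k2).1) + ((γ k3).2 - (γ k4).2) ≤ ((1 : ℕ) : ℤ) * s := by
      push_cast
      linarith
    obtain ⟨_, U, V, hUV, hcard⟩ := count_of_extent Target ((γ k1).1) ((γ k2).1)
      ((γ k3).2) ((γ k4).2) 1 (hk2 k1 hk1K) (hk4 k3 hk3K) hext (by
        rintro c ⟨k, hkp, hc⟩
        have hkK : k ∈ Finset.Icc 0 p := Finset.mem_Icc.2 ⟨Nat.zero_le _, hkp.le⟩
        exact ⟨k, hk2 k hkK, hk1 k hkK, hk4 k hkK, hk3 k hkK, hc⟩)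
    have h6 : Target.ncard ≤ 6 := by
      refine hcard.trans ?_
      have hU1 : U ≤ 1 := by omega
      interval_cases U <;> omega
    rw [hi1]
    norm_num
    omega
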